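/- Let n be a positive integer and λ an infinite cardinal, and let τ be a shift-continuous T₁ topology on I_λ^n. If (I_λ^n, τ) is N_d-compact (every continuous map to the discrete space ℕ has compact, i.e. finite, image), then τ is feebly compact. -/

import Mathlib

open Set Topology

universe v

namespace ISemi

/-- The set of partial injective transformations (partial bijections) of `ι`
with rank (cardinality of the range, equivalently of the domain) at most `n`. -/
def Elem (ι : Type*) (n : ℕ) : Type _ :=
  {f : ι ≃. ι // {a : ι | (f a).isSome}.encard ≤ (n : ℕ∞)}

variable {ι : Type*} {n : ℕ}

/-- Composition of partial bijections (written multiplicatively). -/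
instance : Semigroup (Elem ι n) where
  mul f g := ⟨f.1.trans g.1, by
    refine le_trans (Set.encard_mono ?_) f.2
    intro a ha
    simp only [Set.mem_setOf_eq] at *
    rcases Option.isSome_iff_exists.1 ha with ⟨c, hc⟩
    rcases (PEquiv.trans_eq_some _ _ _ _).1 hc with ⟨b, hb, -⟩
    simp [hb]⟩
  mul_assoc f g h := Subtype.ext (PEquiv.trans_assoc f.1 g.1 h.1)

/-- The inverse partial bijection. -/
def inv (f : Elem ι n) : Elem ι n := ⟨f.1.symm, by
  have key : ∀ (g : ι ≃. ι), {b : ι | (g.symm b).isSome} ⊆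
      (fun p : {a : ι | (g a).isSome} => (g p.1).get p.2) '' Set.univ := by
    intro g b hb
    rcases Option.isSome_iff_exists.1 hb with ⟨a, ha⟩
    have ha' : b ∈ g a := (PEquiv.mem_iff_mem g).1 (Option.mem_def.2 ha)
    simp only [Option.mem_def] at ha'
    refine ⟨⟨a, ?_⟩, Set.mem_univ _, ?_⟩
    · simp [Set.mem_setOf_eq, ha']
    · simp [ha']
  calc {b : ι | (f.1.symm b).isSome}.encard
      ≤ ((fun p : {a : ι | (f.1 a).isSome} => (f.1 p.1).get p.2) '' Set.univ).encard :=
        Set.encard_mono (key f.1)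
    _ ≤ (Set.univ : Set {a : ι | (f.1 a).isSome}).encard := Set.encard_image_le _ _
    _ = {a : ι | (f.1 a).isSome}.encard := by rw [Set.encard_univ, ENat.card_coe_set_eq]
    _ ≤ (n : ℕ∞) := f.2⟩

/-- The zero (the empty partial map). -/
def zero (ι : Type*) (n : ℕ) : Elem ι n := ⟨⊥, by simp [PEquiv.bot_apply]⟩

/-- idempotents -/
def IsIdem (e : Elem ι n) : Prop := e * e = e

/-- The natural partial order on the inverse semigroup `Elem ι n`:
`f ≼ g` iff `f = e * g` for some idempotent `e`. -/
def nle (f g : Elem ι n) : Prop := ∃ e : Elem ι n, IsIdem e ∧ f = e * g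

/-- up-set of `f` w.r.t. the natural partial order -/
def upset (f : Elem ι n) : Set (Elem ι n) := {g | nle f g}

/-- the rank of a partial bijection: the cardinality of its domain (= range) -/
noncomputable def rank (f : Elem ι n) : ℕ∞ := {a : ι | (f.1 a).isSome}.encard

def dom (f : Elem ι n) : Set ι := {a : ι | (f.1 a).isSome}

def ran (f : Elem ι n) : Set ι := {b : ι | (f.1.symm b).isSome}

/-- A topology on `Elem ι n` is shift-continuous if all left and right
translations are continuous. -/
def ShiftContinuous (ι : Type*) (n : ℕ) [TopologicalSpace (Elem ι n)] : Prop :=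
  ∀ a : Elem ι n, Continuous (fun x : Elem ι n => a * x) ∧
    Continuous (fun x : Elem ι n => x * a)

/-- A space is feebly compact if every locally finite family of nonempty open
sets is finite. -/
def FeeblyCompact (X : Type*) [TopologicalSpace X] : Prop :=
  ∀ 𝒰 : Set (Set X), (∀ U ∈ 𝒰, IsOpen U ∧ U.Nonempty) →
    LocallyFinite (fun U : 𝒰 => (U : Set X)) → 𝒰.Finite

/-- A space is `d`-feebly compact if every discrete family of open sets is
finite; a family is discrete if every point has a neighbourhood meeting at
most one member of the family. -/
def DFeeblyCompact (X : Type*) [TopologicalSpace X] : Prop :=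
  ∀ 𝒰 : Set (Set X), (∀ U ∈ 𝒰, IsOpen U) →
    (∀ x : X, ∃ V ∈ 𝓝 x, {U ∈ 𝒰 | (U ∩ V).Nonempty}.Subsingleton) → 𝒰.Finite

/-- countably pracompact: there is a dense set `A` such that every infinite
subset of `A` has an accumulation point in `X`. -/
def CountablyPracompact (X : Type*) [TopologicalSpace X] : Prop :=
  ∃ A : Set X, Dense A ∧ ∀ B ⊆ A, B.Infinite → ∃ x : X, AccPt x (Filter.principal B)

/-- H-closed: closed in every Hausdorff space in which it embeds. -/
def HClosed (X : Type*) [TopologicalSpace X] : Prop :=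
  ∀ (Y : Type v) (_ : TopologicalSpace Y), T2Space Y →
    ∀ e : X → Y, IsEmbedding e → IsClosed (Set.range e)

/-- infra H-closed: every continuous image in a first-countable Hausdorff
space is closed. -/
def InfraHClosed (X : Type*) [TopologicalSpace X] : Prop :=
  ∀ (Y : Type v) (_ : TopologicalSpace Y), T2Space Y →
    FirstCountableTopology Y → ∀ f : X → Y, Continuous f → IsClosed (Set.range f)

/-- `Y`-compactness: every continuous image in `Y` is compact. -/
def YCompact (X : Type*) [TopologicalSpace X] (Y : Type*) [TopologicalSpace Y] : Prop :=
  ∀ f : X → Y, Continuous f → IsCompact (Set.range f)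

/-- scattered: every nonempty subset has a point isolated in it. -/
def Scattered (X : Type*) [TopologicalSpace X] : Prop :=
  ∀ S : Set X, S.Nonempty → ∃ x ∈ S, ∃ U : Set X, IsOpen U ∧ U ∩ S = {x}

/-- semiregular: there is a base consisting of regular open sets. -/
def Semiregular (X : Type*) [TopologicalSpace X] : Prop :=
  ∃ B : Set (Set X), TopologicalSpace.IsTopologicalBasis B ∧
    ∀ U ∈ B, interior (closure U) = U

/-- countably compact: every countable open cover has a finite subcover. -/
def CountablyCompact (X : Type*) [TopologicalSpace X] : Prop :=
  ∀ 𝒰 : Set (Set X), 𝒰.Countable → (∀ U ∈ 𝒰, IsOpen U) → ⋃₀ 𝒰 = Set.univ →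
    ∃ 𝒱 ⊆ 𝒰, 𝒱.Finite ∧ ⋃₀ 𝒱 = Set.univ

section Aux

variable {ι : Type*} {n : ℕ}

lemma aux_mul_fst (f g : Elem ι n) : (f * g).1 = f.1.trans g.1 := rfl

lemma aux_graph_inj :
    Function.Injective (fun f : Elem ι n => {p : ι × ι | f.1 p.1 = some p.2}) := by
  intro f g h
  apply Subtype.ext
  apply PEquiv.ext
  intro a
  have h' := Set.ext_iff.1 h
  cases hf : f.1 a with
  | none =>
    cases hg : g.1 a with
    | none => rfl
    | some b =>
      have := (h' (a, b)).2 hg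
      simp only [Set.mem_setOf_eq] at this
      rw [hf] at this
      exact absurd this (by simp)
  | some b =>
    have := (h' (a, b)).1 (by simpa [Set.mem_setOf_eq] using hf)
    simp only [Set.mem_setOf_eq] at this
    rw [this]

lemma aux_dom_finite (f : Elem ι n) : (dom f).Finite :=
  Set.finite_of_encard_le_coe f.2

lemma aux_ran_eq_dom_inv (f : Elem ι n) : ran f = dom (inv f) := rfl

lemma aux_ran_finite (f : Elem ι n) : (ran f).Finite := by
  rw [aux_ran_eq_dom_inv]; exact aux_dom_finite (inv f)

lemma aux_ran_inv (f : Elem ι n) : ran (inv f) = dom f := rfl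

lemma aux_dom_inv (f : Elem ι n) : dom (inv f) = ran f := rfl

lemma aux_dom_mul_subset (f g : Elem ι n) : dom (f * g) ⊆ dom f := by
  intro a ha
  rcases Option.isSome_iff_exists.1 ha with ⟨c, hc⟩
  rcases (PEquiv.trans_eq_some _ _ _ _).1 hc with ⟨b, hb, -⟩
  simp only [dom, Set.mem_setOf_eq, hb]
  rfl

lemma aux_ran_mul_subset (f g : Elem ι n) : ran (f * g) ⊆ ran g := by
  intro b hb
  rcases Option.isSome_iff_exists.1 hb with ⟨a, ha⟩
  have h1 : (f * g).1 a = some b := (PEquiv.eq_some_iff _).1 ha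
  rcases (PEquiv.trans_eq_some _ _ _ _).1 h1 with ⟨c, -, hc2⟩
  have h2 : g.1.symm b = some c := (PEquiv.eq_some_iff _).2 hc2
  simp only [ran, Set.mem_setOf_eq, h2]
  rfl

lemma aux_K_finite {A B : Set ι} (hA : A.Finite) (hB : B.Finite) :
    {g : Elem ι n | dom g ⊆ B ∧ ran g ⊆ A}.Finite := by
  apply Set.Finite.of_finite_image
    (f := fun f : Elem ι n => {p : ι × ι | f.1 p.1 = some p.2})
  · apply Set.Finite.subset (hB.prod hA).finite_subsets
    rintro s ⟨g, ⟨hd, hr⟩, rfl⟩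
    intro p hp
    simp only [Set.mem_setOf_eq] at hp
    refine Set.mem_prod.2 ⟨hd ?_, hr ?_⟩
    · simp only [dom, Set.mem_setOf_eq, hp]; rfl
    · have : g.1.symm p.2 = some p.1 := (PEquiv.eq_some_iff _).2 hp
      simp only [ran, Set.mem_setOf_eq, this]; rfl
  · exact fun x _ y _ h => aux_graph_inj h

lemma aux_phi_eq_iff (x y : Elem ι n) :
    inv x * y * inv x = inv x ↔ ∀ a b, x.1 a = some b → y.1 a = some b := by
  constructor
  · intro h a b hab
    have hsymm : x.1.symm b = some a := (PEquiv.eq_some_iff _).2 hab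
    have h1 : (inv x * y * inv x).1 b = some a := by rw [h]; exact hsymm
    rcases (PEquiv.trans_eq_some _ _ _ _).1 h1 with ⟨c, hc1, hc2⟩
    rcases (PEquiv.trans_eq_some _ _ _ _).1 hc1 with ⟨a', ha1, ha2⟩
    rw [show (inv x).1 = x.1.symm from rfl] at ha1
    rw [hsymm] at ha1
    injection ha1 with ha1'
    subst ha1'
    have hxc : x.1 a = some c := (PEquiv.eq_some_iff _).1 hc2
    rw [hab] at hxc
    injection hxc with hxc'
    subst hxc'
    exact ha2
  · intro h
    apply Subtype.ext
    apply PEquiv.ext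
    intro b
    show ((x.1.symm.trans y.1).trans x.1.symm) b = x.1.symm b
    cases hb : x.1.symm b with
    | none =>
      cases h2 : ((x.1.symm.trans y.1).trans x.1.symm) b with
      | none => rfl
      | some a =>
        rcases (PEquiv.trans_eq_some _ _ _ _).1 h2 with ⟨c, hc1, -⟩
        rcases (PEquiv.trans_eq_some _ _ _ _).1 hc1 with ⟨a', ha1, -⟩
        rw [hb] at ha1
        exact absurd ha1 (by simp)
    | some a =>
      have hx : x.1 a = some b := (PEquiv.eq_some_iff _).1 hb
      have hy : y.1 a = some b := h a b hx
      exact (PEquiv.trans_eq_some _ _ _ _).2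
        ⟨b, (PEquiv.trans_eq_some _ _ _ _).2 ⟨a, hb, hy⟩, hb⟩

lemma aux_exists_isolated [TopologicalSpace (Elem ι n)] [T1Space (Elem ι n)]
    (hshift : ShiftContinuous ι n) (U : Set (Elem ι n)) (hUo : IsOpen U)
    (hne : U.Nonempty) : ∃ x ∈ U, IsOpen ({x} : Set (Elem ι n)) := by
  classical
  -- ranks as natural numbers
  have hrank : ∀ g : Elem ι n, (dom g).ncard ≤ n := fun g =>
    (Set.encard_le_coe_iff_finite_ncard_le.1 g.2).2
  set R : Set ℕ := (fun g : Elem ι n => (dom g).ncard) '' U with hR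
  have hRne : R.Nonempty := hne.image _
  have hRbdd : BddAbove R := by
    refine ⟨n, ?_⟩
    rintro m ⟨g, -, rfl⟩
    exact hrank g
  have hmem : sSup R ∈ R := Nat.sSup_mem hRne hRbdd
  rcases hmem with ⟨x, hxU, hx⟩
  have hmax : ∀ y ∈ U, (dom y).ncard ≤ (dom x).ncard := by
    intro y hy
    rw [show (dom x).ncard = sSup R from hx]
    exact le_csSup hRbdd ⟨y, hy, rfl⟩
  refine ⟨x, hxU, ?_⟩
  -- the translation map
  set φ : Elem ι n → Elem ι n := fun z => inv x * z * inv x with hφ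
  have hφcont : Continuous φ := by
    have h1 : Continuous (fun z : Elem ι n => inv x * z) := (hshift (inv x)).1
    have h2 : Continuous (fun z : Elem ι n => z * inv x) := (hshift (inv x)).2
    exact h2.comp h1
  set K : Set (Elem ι n) := {g | dom g ⊆ ran x ∧ ran g ⊆ dom x} with hK
  have hKfin : K.Finite := aux_K_finite (aux_dom_finite x) (aux_ran_finite x)
  have hφK : ∀ z, φ z ∈ K := by
    intro z
    constructor
    · intro a ha
      have h1 := aux_dom_mul_subset (inv x * z) (inv x) ha
      have h2 := aux_dom_mul_subset (inv x) z h1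
      rwa [aux_dom_inv] at h2
    · intro b hb
      have := aux_ran_mul_subset (inv x * z) (inv x) hb
      rwa [aux_ran_inv] at this
  have hopen : IsOpen {z : Elem ι n | φ z = inv x} := by
    have heq : {z : Elem ι n | φ z = inv x} = (φ ⁻¹' (K \ {inv x}))ᶜ := by
      ext z
      simp only [Set.mem_setOf_eq, Set.mem_compl_iff, Set.mem_preimage,
        Set.mem_diff, Set.mem_singleton_iff]
      constructor
      · intro h hc; exact hc.2 h
      · intro h
        by_contra hne'
        exact h ⟨hφK z, hne'⟩
    rw [heq]
    exact ((hKfin.subset Set.diff_subset).isClosed.preimage hφcont).isOpen_compl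
  have hsingle : ({x} : Set (Elem ι n)) = {z : Elem ι n | φ z = inv x} ∩ U := by
    apply Set.Subset.antisymm
    · rintro z rfl
      exact ⟨(aux_phi_eq_iff z z).2 fun a b h => h, hxU⟩
    · rintro z ⟨hz1, hz2⟩
      have hext : ∀ a b, x.1 a = some b → z.1 a = some b := (aux_phi_eq_iff x z).1 hz1
      have hsub : dom x ⊆ dom z := by
        intro a ha
        rcases Option.isSome_iff_exists.1 ha with ⟨b, hb⟩
        have := hext a b hb
        simp only [dom, Set.mem_setOf_eq, this]
        rfl
      have heqdom : dom x = dom z :=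
        Set.eq_of_subset_of_ncard_le hsub (hmax z hz2) (aux_dom_finite z)
      have : z = x := by
        apply Subtype.ext
        apply PEquiv.ext
        intro a
        cases hxa : x.1 a with
        | some b => exact hext a b hxa
        | none =>
          have hax : a ∉ dom x := by simp [dom, hxa]
          rw [heqdom] at hax
          exact Option.not_isSome_iff_eq_none.1 hax
      simp [this]
  rw [hsingle]
  exact hopen.inter hUo

end Aux

end ISemi

theorem stmt16 (ι : Type*) [Infinite ι] (n : ℕ) (hn : 0 < n)
    [TopologicalSpace (ISemi.Elem ι n)] [T1Space (ISemi.Elem ι n)]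
    (hshift : ISemi.ShiftContinuous ι n)
    (hN : ISemi.YCompact (ISemi.Elem ι n) ℕ) :
    ISemi.FeeblyCompact (ISemi.Elem ι n) := by
  classical
  intro 𝒰 h𝒰 hlf
  by_contra hfin
  haveI : Nonempty (ISemi.Elem ι n) := ⟨ISemi.zero ι n⟩
  -- choose an isolated point in each member of the family
  choose p hp1 hp2 using fun U : 𝒰 =>
    ISemi.aux_exists_isolated hshift U.1 (h𝒰 U.1 U.2).1 (h𝒰 U.1 U.2).2
  -- local finiteness: around every point, only finitely many chosen points
  have hloc : ∀ y : ISemi.Elem ι n, ∃ V : Set (ISemi.Elem ι n),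
      IsOpen V ∧ y ∈ V ∧ (Set.range p ∩ V).Finite ∧
      {U : 𝒰 | p U ∈ V}.Finite := by
    intro y
    obtain ⟨V, hV, hVfin⟩ := hlf y
    obtain ⟨W, hWV, hWo, hyW⟩ := mem_nhds_iff.1 hV
    have hidx : {U : 𝒰 | p U ∈ W}.Finite := by
      apply hVfin.subset
      intro U hU
      exact ⟨p U, hp1 U, hWV hU⟩
    refine ⟨W, hWo, hyW, ?_, hidx⟩
    have : Set.range p ∩ W ⊆ p '' {U : 𝒰 | p U ∈ W} := by
      rintro z ⟨⟨U, rfl⟩, hzW⟩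
      exact ⟨U, hzW, rfl⟩
    exact (hidx.image p).subset this
  -- the set of chosen points is infinite
  have hDinf : (Set.range p).Infinite := by
    intro hDfin
    apply hfin
    have huniv : (Set.univ : Set 𝒰).Finite := by
      have : (Set.univ : Set 𝒰) ⊆ ⋃ x ∈ Set.range p, {U : 𝒰 | p U = x} := by
        intro U _
        simp only [Set.mem_iUnion, Set.mem_setOf_eq]
        exact ⟨p U, Set.mem_range_self U, rfl⟩
      apply Set.Finite.subset _ this
      apply hDfin.biUnion
      intro x _
      obtain ⟨V, -, hyV, -, hidx⟩ := hloc x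
      apply hidx.subset
      rintro U rfl
      exact hyV
    have : Finite 𝒰 := Set.finite_univ_iff.1 huniv
    exact Set.toFinite 𝒰
  -- get a sequence of distinct isolated points
  let d := hDinf.natEmbedding _
  let e : ℕ → ISemi.Elem ι n := fun k => (d k : ISemi.Elem ι n)
  have heinj : Function.Injective e := fun a b hab =>
    d.injective (Subtype.ext hab)
  have hemem : ∀ k, e k ∈ Set.range p := fun k => (d k).2
  have heiso : ∀ k, IsOpen ({e k} : Set (ISemi.Elem ι n)) := by
    intro k
    obtain ⟨U, hU⟩ := hemem k
    rw [← hU]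
    exact hp2 U
  have heclosed : IsClosed (Set.range e) := by
    rw [← isOpen_compl_iff]
    rw [isOpen_iff_forall_mem_open]
    intro y hy
    obtain ⟨V, hVo, hyV, hVfin, -⟩ := hloc y
    refine ⟨V \ (Set.range e ∩ V), ?_, ?_, ?_⟩
    · intro z hz hz'
      exact hz.2 ⟨hz', hz.1⟩
    · apply hVo.sdiff
      apply Set.Finite.isClosed
      apply hVfin.subset
      apply Set.inter_subset_inter_left
      rintro _ ⟨k, rfl⟩
      exact hemem k
    · exact ⟨hyV, fun hc => hy hc.1⟩
  -- the continuous map to ℕ with infinite range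
  let f : ISemi.Elem ι n → ℕ := fun x =>
    if x ∈ Set.range e then Function.invFun e x + 1 else 0
  have hfe : ∀ k, f (e k) = k + 1 := by
    intro k
    simp only [f, if_pos (Set.mem_range_self k)]
    rw [Function.leftInverse_invFun heinj k]
  have hf0 : ∀ x, x ∉ Set.range e → f x = 0 := by
    intro x hx
    simp only [f, if_neg hx]
  have hcont : Continuous f := by
    rw [continuous_def]
    intro s _
    have heq : f ⁻¹' s = (⋃ k ∈ {k : ℕ | k + 1 ∈ s}, ({e k} : Set (ISemi.Elem ι n)))
        ∪ {x | 0 ∈ s ∧ x ∉ Set.range e} := by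
      ext x
      simp only [Set.mem_preimage, Set.mem_union, Set.mem_iUnion, Set.mem_setOf_eq,
        Set.mem_singleton_iff]
      by_cases hx : x ∈ Set.range e
      · obtain ⟨k, rfl⟩ := hx
        rw [hfe k]
        constructor
        · intro hs
          exact Or.inl ⟨k, hs, rfl⟩
        · rintro (⟨j, hj, hje⟩ | ⟨-, hc⟩)
          · have : j = k := heinj hje.symm
            rwa [this] at hj
          · exact absurd (Set.mem_range_self k) hc
      · rw [hf0 x hx]
        constructor
        · intro hs
          exact Or.inr ⟨hs, hx⟩
        · rintro (⟨j, hj, hje⟩ | ⟨h0, -⟩)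
          · exact absurd ⟨j, hje.symm⟩ hx
          · exact h0
    rw [heq]
    apply IsOpen.union
    · exact isOpen_biUnion fun k _ => heiso k
    · by_cases h0 : 0 ∈ s
      · have : {x : ISemi.Elem ι n | 0 ∈ s ∧ x ∉ Set.range e} = (Set.range e)ᶜ := by
          ext x; simp [h0]
        rw [this]
        exact heclosed.isOpen_compl
      · have : {x : ISemi.Elem ι n | 0 ∈ s ∧ x ∉ Set.range e} = ∅ := by
          ext x; simp [h0]
        rw [this]
        exact isOpen_empty
  have hrangefin : (Set.range f).Finite := (hN f hcont).finite ⟨inferInstance⟩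
  have hrangeinf : (Set.range f).Infinite := by
    apply Set.infinite_of_injective_forall_mem
      (f := fun k : ℕ => k + 1)
    · intro a b hab
      simpa using hab
    · intro k
      exact ⟨e k, hfe k⟩
  exact hrangeinf hrangefin
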